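/- Let θ, b ∈ ℝ with θ > 0 and b > 0, and set t = cosh θ. Suppose s is a complex-analytic function on an open neighborhood U ⊆ ℂ of b such that s(b) = e^{θ}, s′(b) is a positive real number, and (s(w)² − 2t·s(w) + 1)·s′(w) = s(w)·(w² − b²) for all w ∈ U. Then s′(b) = √(b·e^{θ}/sinh θ). -/

import Mathlib

open Complex

/-- The first Taylor coefficient `s₁⁺ = s′(b)` of the saddle-point mapping for the parabolic
cylinder function: if `s` is analytic near `b`, `s(b) = e^θ`, `s′(b) > 0`, and
`(s² − 2ts + 1)·s′ = s·(w² − b²)` with `t = cosh θ`, then `s′(b) = √(b·e^θ/sinh θ)`. -/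
theorem saddle_mapping_first_coefficient
    (θ b : ℝ) (hθ : 0 < θ) (hb : 0 < b)
    (t : ℝ) (ht : t = Real.cosh θ)
    (U : Set ℂ) (hU : IsOpen U) (hbU : (b : ℂ) ∈ U)
    (s : ℂ → ℂ) (hs : DifferentiableOn ℂ s U)
    (hsb : s (b : ℂ) = (Real.exp θ : ℂ))
    (hs'pos : ∃ c : ℝ, 0 < c ∧ deriv s (b : ℂ) = (c : ℂ))
    (hode : ∀ w ∈ U,
      (s w ^ 2 - 2 * (t : ℂ) * s w + 1) * deriv s w = s w * (w ^ 2 - (b : ℂ) ^ 2)) :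
    deriv s (b : ℂ) = ((Real.sqrt (b * Real.exp θ / Real.sinh θ) : ℝ) : ℂ) := by
  obtain ⟨c, hc, hcd⟩ := hs'pos
  have hUb : U ∈ nhds ((b : ℝ) : ℂ) := hU.mem_nhds hbU
  have hA : AnalyticAt ℂ s (b : ℂ) := (hs.analyticAt hUb)
  have hsd : HasDerivAt s (c : ℂ) (b : ℂ) := hcd ▸ hA.differentiableAt.hasDerivAt
  set d : ℂ := deriv (deriv s) (b : ℂ) with hd
  have hAO : AnalyticOnNhd ℂ s U := hs.analyticOnNhd hU
  have hdsd : HasDerivAt (deriv s) d (b : ℂ) :=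
    ((hAO.deriv _ hbU).differentiableAt).hasDerivAt
  -- derivative of LHS
  have H1 : HasDerivAt (fun w => s w ^ 2 - 2 * (t : ℂ) * s w + 1)
      (2 * s (b : ℂ) * c - 2 * (t : ℂ) * c) (b : ℂ) := by
    have h2 : HasDerivAt (fun w => s w ^ 2) (2 * s (b:ℂ) ^ 1 * c) (b : ℂ) := by
      simpa using hsd.fun_pow 2
    have h3 : HasDerivAt (fun w => 2 * (t : ℂ) * s w) (2 * (t : ℂ) * c) (b : ℂ) :=
      hsd.const_mul _
    simpa using (h2.sub h3).add_const 1
  have HL : HasDerivAt (fun w => (s w ^ 2 - 2 * (t : ℂ) * s w + 1) * deriv s w)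
      ((2 * s (b : ℂ) * c - 2 * (t : ℂ) * c) * deriv s (b : ℂ)
        + (s (b:ℂ) ^ 2 - 2 * (t : ℂ) * s (b:ℂ) + 1) * d) (b : ℂ) := H1.mul hdsd
  have HR : HasDerivAt (fun w => s w * (w ^ 2 - (b : ℂ) ^ 2))
      ((c : ℂ) * ((b:ℂ) ^ 2 - (b:ℂ) ^ 2) + s (b:ℂ) * (2 * (b:ℂ))) (b : ℂ) := by
    have h2 : HasDerivAt (fun w : ℂ => w ^ 2 - (b : ℂ) ^ 2) (2 * (b:ℂ)) (b : ℂ) := by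
      simpa using (hasDerivAt_pow 2 ((b:ℝ):ℂ)).sub_const ((b:ℂ)^2)
    exact hsd.mul h2
  have heq : (fun w => (s w ^ 2 - 2 * (t : ℂ) * s w + 1) * deriv s w)
      =ᶠ[nhds ((b:ℝ):ℂ)] (fun w => s w * (w ^ 2 - (b : ℂ) ^ 2)) := by
    filter_upwards [hUb] with w hw using hode w hw
  have hderiv_eq : (2 * s (b : ℂ) * c - 2 * (t : ℂ) * c) * deriv s (b : ℂ)
        + (s (b:ℂ) ^ 2 - 2 * (t : ℂ) * s (b:ℂ) + 1) * d
      = (c : ℂ) * ((b:ℂ) ^ 2 - (b:ℂ) ^ 2) + s (b:ℂ) * (2 * (b:ℂ)) := by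
    rw [← HL.deriv, ← HR.deriv]
    exact heq.deriv_eq
  -- the factor at the saddle vanishes
  have hfac : s (b:ℂ) ^ 2 - 2 * (t : ℂ) * s (b:ℂ) + 1 = 0 := by
    rw [hsb, ht]
    have : (Real.cosh θ : ℂ) = (Real.exp θ + Real.exp (-θ)) / 2 := by
      rw [Real.cosh_eq]; push_cast; ring
    have h1 : (Real.exp (-θ) : ℂ) * (Real.exp θ : ℂ) = 1 := by
      rw [← Complex.ofReal_mul, ← Real.exp_add]; simp
    rw [this]
    linear_combination -h1
  rw [hcd, hfac] at hderiv_eq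
  -- extract real equation: 2 (e^θ - cosh θ) c² = 2 b e^θ
  have key : (Real.sinh θ : ℂ) * (c : ℂ) ^ 2 = (b : ℂ) * (Real.exp θ : ℂ) := by
    have hsinh : (Real.sinh θ : ℂ) = (Real.exp θ : ℂ) - (Real.cosh θ : ℂ) := by
      rw [Real.sinh_eq, Real.cosh_eq]; push_cast; ring
    rw [hsb, ht] at hderiv_eq
    rw [hsinh]
    linear_combination hderiv_eq / 2
  have keyR : Real.sinh θ * c ^ 2 = b * Real.exp θ := by
    exact_mod_cast key
  have hsinhpos : 0 < Real.sinh θ := Real.sinh_pos_iff.mpr hθ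
  have hc2 : c ^ 2 = b * Real.exp θ / Real.sinh θ := by
    field_simp at keyR ⊢; linarith
  have : Real.sqrt (b * Real.exp θ / Real.sinh θ) = c := by
    rw [← hc2, Real.sqrt_sq hc.le]
  rw [hcd, this]
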